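/- Every squarefree integer m ≥ 1 with F(m) ≤ p² (p a prime) satisfies m ≤ 2p² and P⁺(m) ≤ p, where P⁺(m) is the largest prime factor of m (with P⁺(1) = 1). -/
import Mathlib


def Fdiv (n : ℕ) : ℕ :=
  if n = 1 then 1 else (n.divisors.filter (fun d => 1 < d)).sup (fun d => d * d.minFac)

def Pplus (n : ℕ) : ℕ := if n = 1 then 1 else n.primeFactors.sup id

theorem squarefree_dense_bounds (p : ℕ) (hp : p.Prime) (m : ℕ) (hm : 1 ≤ m)
    (hsf : Squarefree m) (hF : Fdiv m ≤ p ^ 2) :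
    m ≤ 2 * p ^ 2 ∧ Pplus m ≤ p := by
  rcases eq_or_lt_of_le hm with h1 | h2
  · subst h1
    refine ⟨by nlinarith [hp.two_le], ?_⟩
    simp [Pplus, hp.two_le, hp.one_lt.le]
  · have hm1 : m ≠ 1 := by omega
    have hm0 : m ≠ 0 := by omega
    rw [Fdiv, if_neg hm1] at hF
    have hmem : m ∈ m.divisors.filter (fun d => 1 < d) := by
      simp [Nat.mem_divisors, hm0, h2]
    have hF2 : m * m.minFac ≤ p ^ 2 := le_trans (Finset.le_sup (f := fun d => d * d.minFac) hmem) hF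
    have hmin : 2 ≤ m.minFac := (Nat.minFac_prime hm1).two_le
    constructor
    · nlinarith
    · rw [Pplus, if_neg hm1]
      apply Finset.sup_le
      intro q hq
      rw [Nat.mem_primeFactors] at hq
      obtain ⟨hqp, hqd, -⟩ := hq
      have hmemq : q ∈ m.divisors.filter (fun d => 1 < d) := by
        simp [Nat.mem_divisors, hm0, hqd, hqp.one_lt]
      have : q * q.minFac ≤ p ^ 2 := le_trans (Finset.le_sup (f := fun d => d * d.minFac) hmemq) hF
      rw [hqp.minFac_eq] at this
      have : q ^ 2 ≤ p ^ 2 := by nlinarith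
      exact (Nat.pow_le_pow_iff_left (by norm_num)).mp this
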